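/- For every integer m ≥ 2, the nontrivial ordinary numerical semigroup Λ = {0} ∪ {n ∈ ℕ : n ≥ m} has exactly m(m−1)/2 + 3 grandchildren. -/
import Mathlib


/-- A numerical semigroup: a cofinite submonoid of ℕ, viewed as a set of naturals. -/
def IsNumericalSemigroup (S : Set ℕ) : Prop :=
  0 ∈ S ∧ (∀ a ∈ S, ∀ b ∈ S, a + b ∈ S) ∧ ∃ N : ℕ, ∀ n : ℕ, N ≤ n → n ∈ S

/-- The conductor: the smallest `N` such that every `n ≥ N` belongs to `S`. -/
noncomputable def sgConductor (S : Set ℕ) : ℕ :=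
  sInf {N : ℕ | ∀ n : ℕ, N ≤ n → n ∈ S}

/-- The genus: the number of gaps. -/
noncomputable def sgGenus (S : Set ℕ) : ℕ :=
  Sᶜ.ncard

/-- The rank `k(Λ) = c(Λ) - g(Λ)`. -/
noncomputable def sgRank (S : Set ℕ) : ℕ :=
  sgConductor S - sgGenus S

/-- The multiplicity: the smallest nonzero element. -/
noncomputable def sgMultiplicity (S : Set ℕ) : ℕ :=
  sInf {n : ℕ | n ∈ S ∧ n ≠ 0}

/-- The Frobenius number: the largest gap, i.e. the conductor minus one. -/
noncomputable def sgFrobenius (S : Set ℕ) : ℕ :=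
  sgConductor S - 1

/-- `sgElem S j` is the element `λ_j` of `S = {λ_0 = 0 < λ_1 < λ_2 < ⋯}`. -/
noncomputable def sgElem (S : Set ℕ) (j : ℕ) : ℕ :=
  Nat.nth (· ∈ S) j

/-- The jump `u_j = λ_{j+1} - λ_j`. -/
noncomputable def sgJump (S : Set ℕ) (j : ℕ) : ℕ :=
  sgElem S (j + 1) - sgElem S j

/-- The left elements: elements of `S` smaller than the Frobenius number. -/
def sgLeftElements (S : Set ℕ) : Set ℕ :=
  {x : ℕ | x ∈ S ∧ x + 1 < sgConductor S}

/-- A minimal generator: a nonzero element not the sum of two nonzero elements. -/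
def IsMinimalGenerator (S : Set ℕ) (x : ℕ) : Prop :=
  x ∈ S ∧ x ≠ 0 ∧ ¬ ∃ a ∈ S, ∃ b ∈ S, a ≠ 0 ∧ b ≠ 0 ∧ a + b = x

/-- A right generator: a minimal generator larger than the Frobenius number. -/
def IsRightGenerator (S : Set ℕ) (x : ℕ) : Prop :=
  IsMinimalGenerator S x ∧ sgFrobenius S < x

/-- A strong generator: a right generator `μ` such that `μ + m(Λ)` is a minimal
generator of `Λ ∖ {μ}`. -/
noncomputable def IsStrongGenerator (S : Set ℕ) (x : ℕ) : Prop :=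
  IsRightGenerator S x ∧ IsMinimalGenerator (S \ {x}) (x + sgMultiplicity S)

/-- A new generator of `Λ`: a minimal generator of `Λ` that is not a minimal
generator of `Λ ∪ {F(Λ)}`. -/
noncomputable def IsNewGenerator (S : Set ℕ) (x : ℕ) : Prop :=
  IsMinimalGenerator S x ∧ ¬ IsMinimalGenerator (S ∪ {sgFrobenius S}) x

/-- `x` (an element `λ_s ≥ c(Λ)`) is an order-`p` seed of `Λ` if
`x + λ_p ≠ λ_i + λ_j` for all `p < i ≤ j < s`, i.e. for all `i ≤ j` with
`p < i` and `λ_j < x`. -/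
noncomputable def IsSeed (S : Set ℕ) (p x : ℕ) : Prop :=
  sgConductor S ≤ x ∧ ∀ i j : ℕ, p < i → i ≤ j → sgElem S j < x →
    x + sgElem S p ≠ sgElem S i + sgElem S j

/-- `T` is a child of `S`: obtained by removing one right generator. -/
def IsChild (T S : Set ℕ) : Prop :=
  ∃ μ : ℕ, IsRightGenerator S μ ∧ T = S \ {μ}

/-- A grandchild: a child of a child. -/
def IsGrandchild (T S : Set ℕ) : Prop :=
  ∃ C : Set ℕ, IsChild C S ∧ IsChild T C

/-- A great-grandchild: a child of a grandchild. -/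
def IsGreatGrandchild (T S : Set ℕ) : Prop :=
  ∃ C : Set ℕ, IsGrandchild C S ∧ IsChild T C

/-- `⟨a,b,c,…⟩|_κ`: the smallest numerical semigroup containing a given set. -/
def sgClosure (A : Set ℕ) : Set ℕ :=
  ⋂₀ {S : Set ℕ | IsNumericalSemigroup S ∧ A ⊆ S}


def Lm (m : ℕ) : Set ℕ := ({0} : Set ℕ) ∪ {n : ℕ | m ≤ n}

lemma memLm {m x : ℕ} : x ∈ Lm m ↔ x = 0 ∨ m ≤ x := by
  simp [Lm, Set.mem_union]

lemma condLm {m : ℕ} (hm : 2 ≤ m) : sgConductor (Lm m) = m := by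
  unfold sgConductor
  apply le_antisymm
  · exact Nat.sInf_le (fun n hn => memLm.2 (Or.inr hn))
  · by_contra h
    push_neg at h
    have hne : {N : ℕ | ∀ n : ℕ, N ≤ n → n ∈ Lm m}.Nonempty :=
      ⟨m, fun n hn => memLm.2 (Or.inr hn)⟩
    have hmem := Nat.sInf_mem hne
    have := hmem (m - 1) (by omega)
    rw [memLm] at this
    omega

lemma rgenLm {m x : ℕ} (hm : 2 ≤ m) :
    IsRightGenerator (Lm m) x ↔ m ≤ x ∧ x < 2 * m := by
  unfold IsRightGenerator IsMinimalGenerator sgFrobenius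
  rw [condLm hm]
  constructor
  · rintro ⟨⟨hx, hx0, hns⟩, _⟩
    rw [memLm] at hx
    refine ⟨by omega, ?_⟩
    by_contra h
    push_neg at h
    exact hns ⟨m, memLm.2 (Or.inr le_rfl), x - m,
      memLm.2 (Or.inr (by omega)), by omega, by omega, by omega⟩
  · rintro ⟨h1, h2⟩
    refine ⟨⟨memLm.2 (Or.inr h1), by omega, ?_⟩, by omega⟩
    rintro ⟨a, ha, b, hb, ha0, hb0, hab⟩
    rw [memLm] at ha hb
    omega

lemma LmErase {m : ℕ} (hm : 1 ≤ m) : Lm m \ {m} = Lm (m + 1) := by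
  ext x
  simp only [Set.mem_diff, memLm, Set.mem_singleton_iff]
  omega

lemma memC {m μ x : ℕ} : x ∈ Lm m \ {μ} ↔ (x = 0 ∨ m ≤ x) ∧ x ≠ μ := by
  simp [Set.mem_diff, memLm]

lemma condC {m μ : ℕ} (hm : 2 ≤ m) (h1 : m ≤ μ) :
    sgConductor (Lm m \ {μ}) = μ + 1 := by
  unfold sgConductor
  apply le_antisymm
  · exact Nat.sInf_le (fun n hn => memC.2 ⟨Or.inr (by omega), by omega⟩)
  · by_contra h
    push_neg at h
    have hne : {N : ℕ | ∀ n : ℕ, N ≤ n → n ∈ Lm m \ {μ}}.Nonempty :=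
      ⟨μ + 1, fun n hn => memC.2 ⟨Or.inr (by omega), by omega⟩⟩
    have hmem := Nat.sInf_mem hne
    have := hmem μ (by omega)
    rw [memC] at this
    omega

lemma rgenC {m μ x : ℕ} (hm : 2 ≤ m) (h1 : m < μ) (h2 : μ < 2 * m) :
    IsRightGenerator (Lm m \ {μ}) x ↔
      (μ < x ∧ x < 2 * m) ∨ (μ = m + 1 ∧ x = 2 * m + 1) := by
  unfold IsRightGenerator IsMinimalGenerator sgFrobenius
  rw [condC hm (by omega)]
  constructor
  · rintro ⟨⟨hx, hx0, hns⟩, hfr⟩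
    rw [memC] at hx
    have hxμ : μ < x := by omega
    by_contra hcon
    push_neg at hcon
    have h2m : 2 * m ≤ x := by
      rcases hcon with ⟨hc1, _⟩; omega
    rcases Nat.lt_or_ge x (2 * m + 1) with h | h
    · exact hns ⟨m, memC.2 ⟨Or.inr le_rfl, by omega⟩, m,
        memC.2 ⟨Or.inr le_rfl, by omega⟩, by omega, by omega, by omega⟩
    · by_cases hxm : x - m = μ
      · have hμ2 : m + 2 ≤ μ := by
          rcases hcon with ⟨_, hc2⟩
          by_contra hb
          exact absurd (hc2 (by omega)) (by omega)
        exact hns ⟨m + 1, memC.2 ⟨Or.inr (by omega), by omega⟩, μ - 1,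
          memC.2 ⟨Or.inr (by omega), by omega⟩, by omega, by omega, by omega⟩
      · exact hns ⟨m, memC.2 ⟨Or.inr le_rfl, by omega⟩, x - m,
          memC.2 ⟨Or.inr (by omega), hxm⟩, by omega, by omega, by omega⟩
  · rintro (⟨ha, hb⟩ | ⟨ha, hb⟩)
    · refine ⟨⟨memC.2 ⟨Or.inr (by omega), by omega⟩, by omega, ?_⟩, by omega⟩
      rintro ⟨a, haa, b, hbb, ha0, hb0, hab⟩
      rw [memC] at haa hbb
      omega
    · refine ⟨⟨memC.2 ⟨Or.inr (by omega), by omega⟩, by omega, ?_⟩, by omega⟩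
      rintro ⟨a, haa, b, hbb, ha0, hb0, hab⟩
      rw [memC] at haa hbb
      omega

lemma diffpair (S : Set ℕ) (a b : ℕ) :
    (S \ {a}) \ {b} = S \ {a, b} := by
  rw [Set.diff_diff, Set.singleton_union]

lemma grandLm {m : ℕ} (hm : 2 ≤ m) (T : Set ℕ) :
    IsGrandchild T (Lm m) ↔
      ∃ a b : ℕ, ((m ≤ a ∧ a < b ∧ b < 2 * m) ∨ (a = m ∧ b = 2 * m) ∨
        (a = m ∧ b = 2 * m + 1) ∨ (a = m + 1 ∧ b = 2 * m + 1)) ∧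
        T = Lm m \ {a, b} := by
  constructor
  · rintro ⟨C, ⟨μ, hμ, rfl⟩, ⟨ν, hν, rfl⟩⟩
    rw [rgenLm hm] at hμ
    by_cases hμm : μ = m
    · rw [hμm] at hν
      rw [LmErase (by omega), rgenLm (by omega)] at hν
      exact ⟨μ, ν, by omega, diffpair _ _ _⟩
    · rw [rgenC hm (by omega) hμ.2] at hν
      exact ⟨μ, ν, by omega, diffpair _ _ _⟩
  · rintro ⟨a, b, hcond, rfl⟩
    rw [← diffpair]
    have hchild : ∀ c, m ≤ c → c < 2 * m → IsChild (Lm m \ {c}) (Lm m) :=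
      fun c h1 h2 => ⟨c, (rgenLm hm).2 ⟨h1, h2⟩, rfl⟩
    rcases hcond with ⟨h1, h2, h3⟩ | ⟨h1, h2⟩ | ⟨h1, h2⟩ | ⟨h1, h2⟩
    · by_cases ham : a = m
      · refine ⟨Lm m \ {a}, hchild a h1 (by omega), b, ?_, rfl⟩
        rw [ham, LmErase (by omega), rgenLm (by omega)]
        omega
      · refine ⟨Lm m \ {a}, hchild a h1 (by omega), b, ?_, rfl⟩
        rw [rgenC hm (by omega) (by omega)]
        omega
    · refine ⟨Lm m \ {a}, hchild a (by omega) (by omega), b, ?_, rfl⟩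
      rw [h1, h2, LmErase (by omega), rgenLm (by omega)]
      omega
    · refine ⟨Lm m \ {a}, hchild a (by omega) (by omega), b, ?_, rfl⟩
      rw [h1, h2, LmErase (by omega), rgenLm (by omega)]
      omega
    · refine ⟨Lm m \ {a}, hchild a (by omega) (by omega), b, ?_, rfl⟩
      rw [h1, h2, rgenC hm (by omega) (by omega)]
      omega

def Pfin (m : ℕ) : Finset (ℕ × ℕ) :=
  ((Finset.Ico m (2 * m)).biUnion fun b => (Finset.Ico m b).image fun a => (a, b))
    ∪ {(m, 2 * m), (m, 2 * m + 1), (m + 1, 2 * m + 1)}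

lemma memPfin {m : ℕ} {p : ℕ × ℕ} :
    p ∈ Pfin m ↔ (m ≤ p.1 ∧ p.1 < p.2 ∧ p.2 < 2 * m) ∨ (p.1 = m ∧ p.2 = 2 * m) ∨
      (p.1 = m ∧ p.2 = 2 * m + 1) ∨ (p.1 = m + 1 ∧ p.2 = 2 * m + 1) := by
  rcases p with ⟨a, b⟩
  simp only [Pfin, Finset.mem_union, Finset.mem_biUnion, Finset.mem_image,
    Finset.mem_Ico, Finset.mem_insert, Finset.mem_singleton, Prod.mk.injEq]
  constructor
  · rintro ((⟨c, hc, d, hd, h1, h2⟩) | h | h | h) <;> omega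
  · rintro (h | h | h | h)
    · exact Or.inl ⟨b, by omega, a, by omega, rfl, rfl⟩
    all_goals omega

lemma cardPfin {m : ℕ} (hm : 2 ≤ m) : (Pfin m).card = m * (m - 1) / 2 + 3 := by
  unfold Pfin
  have hdisj : ∀ x ∈ Finset.Ico m (2 * m), ∀ y ∈ Finset.Ico m (2 * m), x ≠ y →
      Disjoint ((Finset.Ico m x).image fun a => (a, x))
        ((Finset.Ico m y).image fun a => (a, y)) := by
    intro x _ y _ hxy
    rw [Finset.disjoint_left]
    rintro ⟨a, b⟩ h1 h2
    simp only [Finset.mem_image, Finset.mem_Ico, Prod.mk.injEq] at h1 h2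
    obtain ⟨c, _, _, hc⟩ := h1
    obtain ⟨d, _, _, hd⟩ := h2
    exact hxy (hc ▸ hd ▸ rfl)
  rw [Finset.card_union_of_disjoint]
  · congr 1
    · rw [Finset.card_biUnion hdisj]
      have hinj : ∀ b : ℕ, Function.Injective (fun a : ℕ => (a, b)) :=
        fun b x y h => by simpa using congrArg Prod.fst h
      have hc : ∀ b ∈ Finset.Ico m (2 * m),
          ((Finset.Ico m b).image fun a => (a, b)).card = b - m := by
        intro b _
        rw [Finset.card_image_of_injective _ (hinj b), Nat.card_Ico]
      rw [Finset.sum_congr rfl hc, Finset.sum_Ico_eq_sum_range]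
      simp only [Nat.add_sub_cancel_left]
      have h2 : 2 * m - m = m := by omega
      rw [h2, Finset.sum_range_id]
    · rw [Finset.card_insert_of_notMem (by
          simp only [Finset.mem_insert, Finset.mem_singleton, Prod.mk.injEq]; omega),
        Finset.card_insert_of_notMem (by
          simp only [Finset.mem_singleton, Prod.mk.injEq]; omega),
        Finset.card_singleton]
  · rw [Finset.disjoint_left]
    rintro ⟨a, b⟩ hab hmem
    simp only [Finset.mem_biUnion, Finset.mem_image, Finset.mem_Ico, Prod.mk.injEq] at hab
    simp only [Finset.mem_insert, Finset.mem_singleton, Prod.mk.injEq] at hmem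
    obtain ⟨c, hc, d, hd, h1, h2⟩ := hab
    omega

theorem statement9 (m : ℕ) (hm : 2 ≤ m) :
    {T : Set ℕ | IsGrandchild T (({0} : Set ℕ) ∪ {n : ℕ | m ≤ n})}.ncard =
      m * (m - 1) / 2 + 3 := by
  classical
  have hset : {T : Set ℕ | IsGrandchild T (({0} : Set ℕ) ∪ {n : ℕ | m ≤ n})}
      = ↑((Pfin m).image fun p => Lm m \ {p.1, p.2}) := by
    ext T
    simp only [Set.mem_setOf_eq, Finset.coe_image, Set.mem_image, Finset.mem_coe]
    rw [show (({0} : Set ℕ) ∪ {n : ℕ | m ≤ n}) = Lm m from rfl, grandLm hm]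
    constructor
    · rintro ⟨a, b, hc, rfl⟩
      exact ⟨(a, b), memPfin.2 hc, rfl⟩
    · rintro ⟨⟨a, b⟩, hp, rfl⟩
      exact ⟨a, b, memPfin.1 hp, rfl⟩
  have hinj : Set.InjOn (fun p : ℕ × ℕ => Lm m \ {p.1, p.2}) ↑(Pfin m) := by
    intro p hp q hq heq
    simp only [Finset.mem_coe] at hp hq
    rw [memPfin] at hp hq
    simp only at heq
    have hpb : m ≤ p.1 ∧ p.1 < p.2 := by omega
    have hqb : m ≤ q.1 ∧ q.1 < q.2 := by omega
    have key : ∀ x : ℕ, m ≤ x → (x = p.1 ∨ x = p.2 ↔ x = q.1 ∨ x = q.2) := by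
      intro x hx
      have hxL : x ∈ Lm m := memLm.2 (Or.inr hx)
      constructor
      · intro h
        have hni : x ∉ Lm m \ {p.1, p.2} := by
          simp only [Set.mem_diff, Set.mem_insert_iff, Set.mem_singleton_iff]
          tauto
        rw [heq] at hni
        simp only [Set.mem_diff, Set.mem_insert_iff, Set.mem_singleton_iff] at hni
        tauto
      · intro h
        have hni : x ∉ Lm m \ {q.1, q.2} := by
          simp only [Set.mem_diff, Set.mem_insert_iff, Set.mem_singleton_iff]
          tauto
        rw [← heq] at hni
        simp only [Set.mem_diff, Set.mem_insert_iff, Set.mem_singleton_iff] at hni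
        tauto
    have k1 := key p.1 hpb.1
    have k2 := key p.2 (by omega)
    have k3 := key q.1 hqb.1
    have k4 := key q.2 (by omega)
    have hpq : p.1 = q.1 ∧ p.2 = q.2 := by omega
    exact Prod.ext hpq.1 hpq.2
  rw [hset, Set.ncard_coe_finset, Finset.card_image_of_injOn hinj, cardPfin hm]
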